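/- For x ~ N(0, I_d) in R^d and any constant c with 0 < c ≤ 1/(3d), the moment generating function of the norm satisfies E[exp(c‖x‖)] ≤ 1 + 5√d · c. -/

import Mathlib

open MeasureTheory ProbabilityTheory Real Finset
open scoped RealInnerProductSpace BigOperators ENNReal NNReal

noncomputable def stdGaussian (d : ℕ) : Measure (EuclideanSpace ℝ (Fin d)) :=
  (Measure.pi fun _ : Fin d => gaussianReal 0 1).map ⇑(EuclideanSpace.equiv (Fin d) ℝ).symm

noncomputable def gmmPsi {d n : ℕ} (w : Fin n → ℝ) (μ : Fin n → EuclideanSpace ℝ (Fin d))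
    (i : Fin n) (x : EuclideanSpace ℝ (Fin d)) : ℝ :=
  w i * Real.exp (-‖x - μ i‖ ^ 2 / 2) / ∑ k, w k * Real.exp (-‖x - μ k‖ ^ 2 / 2)

noncomputable def psiTilde {d n : ℕ} (w : Fin n → ℝ) (μ : Fin n → EuclideanSpace ℝ (Fin d))
    (x : EuclideanSpace ℝ (Fin d)) : EuclideanSpace ℝ (Fin d) :=
  ∑ i, gmmPsi w μ i x • μ i

noncomputable def gmmPdf {d n : ℕ} (w : Fin n → ℝ) (μ : Fin n → EuclideanSpace ℝ (Fin d))
    (x : EuclideanSpace ℝ (Fin d)) : ℝ :=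
  ∑ i, w i * ((2 * Real.pi) ^ (-(d : ℝ) / 2) * Real.exp (-‖x - μ i‖ ^ 2 / 2))

noncomputable def gmmLoss {d n : ℕ} (w : Fin n → ℝ) (μ : Fin n → EuclideanSpace ℝ (Fin d)) : ℝ :=
  -∫ x, Real.log (gmmPdf w μ x / ((2 * Real.pi) ^ (-(d : ℝ) / 2) * Real.exp (-‖x‖ ^ 2 / 2)))
      ∂ stdGaussian d

noncomputable def gmmGrad {d n : ℕ} (w : Fin n → ℝ) (μ : Fin n → EuclideanSpace ℝ (Fin d))
    (i : Fin n) : EuclideanSpace ℝ (Fin d) :=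
  ∫ x, gmmPsi w μ i x • psiTilde w μ x ∂ stdGaussian d

/-! ### Auxiliary lemmas -/

lemma integral_gaussianReal_std (f : ℝ → ℝ) :
    ∫ x, f x ∂(gaussianReal 0 1) = ∫ x, gaussianPDFReal 0 1 x * f x := by
  rw [gaussianReal_of_var_ne_zero 0 one_ne_zero]
  have h : gaussianPDF 0 1 = fun x => ((gaussianPDFReal 0 1 x).toNNReal : ℝ≥0∞) := rfl
  rw [h, integral_withDensity_eq_integral_smul (measurable_gaussianPDFReal 0 1).real_toNNReal f]
  refine integral_congr_ae (Filter.Eventually.of_forall fun x => ?_)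
  simp [NNReal.smul_def, Real.coe_toNNReal _ (gaussianPDFReal_nonneg 0 1 x)]

lemma pdf_mul_exp (s x : ℝ) :
    gaussianPDFReal 0 1 x * Real.exp (s * x ^ 2 / 2)
      = (Real.sqrt (2 * π))⁻¹ * Real.exp (-((1 - s) / 2) * x ^ 2) := by
  simp only [gaussianPDFReal, NNReal.coe_one, mul_one, sub_zero]
  have h : -x ^ 2 / 2 + s * x ^ 2 / 2 = -((1 - s) / 2) * x ^ 2 := by ring
  rw [mul_assoc, ← Real.exp_add, h]

lemma integrable_exp_sq_gaussianReal {s : ℝ} (hs : s < 1) :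
    Integrable (fun x => Real.exp (s * x ^ 2 / 2)) (gaussianReal 0 1) := by
  rw [gaussianReal_of_var_ne_zero 0 one_ne_zero]
  have h : gaussianPDF 0 1 = fun x => ((gaussianPDFReal 0 1 x).toNNReal : ℝ≥0∞) := rfl
  rw [h, integrable_withDensity_iff_integrable_smul
    (measurable_gaussianPDFReal 0 1).real_toNNReal]
  have heq : (fun x => (gaussianPDFReal 0 1 x).toNNReal • Real.exp (s * x ^ 2 / 2))
      = fun x => (Real.sqrt (2 * π))⁻¹ * Real.exp (-((1 - s) / 2) * x ^ 2) := by
    ext x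
    rw [NNReal.smul_def, Real.coe_toNNReal _ (gaussianPDFReal_nonneg 0 1 x), smul_eq_mul,
      pdf_mul_exp]
  rw [heq]
  exact (integrable_exp_neg_mul_sq (by linarith : (0:ℝ) < (1 - s) / 2)).const_mul _

lemma integral_exp_sq_gaussianReal {s : ℝ} (hs : s < 1) :
    ∫ x, Real.exp (s * x ^ 2 / 2) ∂(gaussianReal 0 1) = Real.sqrt ((1 - s)⁻¹) := by
  have h1s : (0:ℝ) < 1 - s := by linarith
  rw [integral_gaussianReal_std]
  simp_rw [pdf_mul_exp]
  rw [integral_const_mul, integral_gaussian]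
  have h : π / ((1 - s) / 2) = 2 * π * (1 - s)⁻¹ := by
    field_simp
  rw [h, Real.sqrt_mul (by positivity : (0:ℝ) ≤ 2 * π) ((1 - s)⁻¹), ← mul_assoc,
    inv_mul_cancel₀ (by positivity : Real.sqrt (2 * π) ≠ 0), one_mul]

lemma integral_pi_prod_gaussian (d : ℕ) (f : ℝ → ℝ) :
    ∫ y : Fin d → ℝ, ∏ i, f (y i) ∂(Measure.pi fun _ => gaussianReal 0 1)
      = (∫ x, f x ∂(gaussianReal 0 1)) ^ d := by
  letI : MeasureSpace ℝ := ⟨gaussianReal 0 1⟩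
  haveI : SigmaFinite (volume : Measure ℝ) := inferInstanceAs (SigmaFinite (gaussianReal 0 1))
  have := MeasureTheory.integral_fintype_prod_eq_pow (ι := Fin d) f (μ := gaussianReal 0 1)
  rw [Fintype.card_fin] at this
  exact this

set_option maxHeartbeats 1000000 in
lemma integrable_pi_prod_gaussian (d : ℕ) (f : ℝ → ℝ) (hf : Integrable f (gaussianReal 0 1)) :
    Integrable (fun y : Fin d → ℝ => ∏ i, f (y i)) (Measure.pi fun _ => gaussianReal 0 1) := by
  letI : MeasureSpace ℝ := ⟨gaussianReal 0 1⟩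
  haveI : SigmaFinite (volume : Measure ℝ) := inferInstanceAs (SigmaFinite (gaussianReal 0 1))
  exact MeasureTheory.Integrable.fintype_prod (f := fun _ : Fin d => f) (fun _ => hf)

set_option maxHeartbeats 1000000 in
/-- For `x ~ N(0, I_d)` and any `0 < c ≤ 1/(3d)`, `E[exp(c‖x‖)] ≤ 1 + 5√d · c`. -/
theorem mgf_norm_upper_bound (d : ℕ) (c : ℝ) (hc : 0 < c) (hc' : c ≤ 1 / (3 * d)) :
    ∫ x, Real.exp (c * ‖x‖) ∂ stdGaussian d ≤ 1 + 5 * Real.sqrt d * c := by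
  rcases Nat.eq_zero_or_pos d with rfl | hd
  · norm_num at hc'
    linarith
  have hd1 : (1:ℝ) ≤ d := Nat.one_le_cast.mpr hd
  have hsd : 0 < Real.sqrt d := Real.sqrt_pos.mpr (by linarith)
  have hsd1 : 1 ≤ Real.sqrt d := Real.one_le_sqrt.mpr hd1
  have hdd : Real.sqrt d * Real.sqrt d = (d:ℝ) := Real.mul_self_sqrt (by positivity)
  set a : ℝ := Real.sqrt d * c with ha
  set s : ℝ := c / Real.sqrt d with hs
  have hc3 : c ≤ 1/3 := by
    have h3d : (3:ℝ) ≤ 3 * d := by linarith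
    calc c ≤ 1 / (3 * d) := hc'
      _ ≤ 1 / 3 := by
        apply one_div_le_one_div_of_le (by norm_num) h3d
  have ha_pos : 0 < a := mul_pos hsd hc
  have ha_le : a ≤ 1/3 := by
    have h1 : Real.sqrt d ≤ (d:ℝ) := by nlinarith
    have h2 : a ≤ (d:ℝ) * c := by
      rw [ha]; exact mul_le_mul_of_nonneg_right h1 hc.le
    have h3 : (d:ℝ) * c ≤ 1/3 := by
      have h3d : (0:ℝ) < 3 * d := by linarith
      rw [le_div_iff₀ h3d] at hc'
      linarith
    linarith
  have hs_pos : 0 < s := div_pos hc hsd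
  have hs_le : s ≤ 1/3 := by
    have : s ≤ c := div_le_self hc.le hsd1
    linarith
  have hs1 : s < 1 := by linarith
  have h1s : (0:ℝ) < 1 - s := by linarith
  have hds : (d:ℝ) * s = a := by
    rw [hs, ha]
    field_simp
    nlinarith [hdd]
  -- Step 1: rewrite the integral over the pi measure
  have h1 : ∫ x, Real.exp (c * ‖x‖) ∂ stdGaussian d
      = ∫ y : Fin d → ℝ, Real.exp (c * Real.sqrt (∑ i, y i ^ 2))
          ∂(Measure.pi fun _ : Fin d => gaussianReal 0 1) := by
    have hcoe : ⇑(EuclideanSpace.equiv (Fin d) ℝ).symm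
        = ⇑(MeasurableEquiv.toLp 2 (Fin d → ℝ)) := rfl
    rw [_root_.stdGaussian, hcoe, integral_map_equiv]
    refine integral_congr_ae (Filter.Eventually.of_forall fun y => ?_)
    have hnorm : ‖(MeasurableEquiv.toLp 2 (Fin d → ℝ)) y‖
        = Real.sqrt (∑ i, y i ^ 2) := by
      rw [EuclideanSpace.norm_eq]
      congr 1
      refine Finset.sum_congr rfl fun i _ => ?_
      rw [Real.norm_eq_abs, sq_abs]
      rfl
    beta_reduce
    rw [hnorm]
  -- Step 2: pointwise bound
  have h2 : ∀ y : Fin d → ℝ, Real.exp (c * Real.sqrt (∑ i, y i ^ 2))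
      ≤ Real.exp (a / 2) * ∏ i, Real.exp (s * y i ^ 2 / 2) := by
    intro y
    rw [← Real.exp_sum, ← Real.exp_add]
    apply Real.exp_le_exp.mpr
    have hsum : ∑ i, s * y i ^ 2 / 2 = s * (∑ i, y i ^ 2) / 2 := by
      rw [Finset.mul_sum, Finset.sum_div]
    rw [hsum]
    set t := Real.sqrt (∑ i, y i ^ 2) with ht
    have ht0 : 0 ≤ t := Real.sqrt_nonneg _
    have ht2 : t ^ 2 = ∑ i, y i ^ 2 := Real.sq_sqrt (by positivity)
    rw [← ht2, ha, hs]
    rw [← sub_nonneg]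
    have key : Real.sqrt d * c / 2 + c / Real.sqrt d * t ^ 2 / 2 - c * t
        = c * (t - Real.sqrt d) ^ 2 / (2 * Real.sqrt d) := by
      field_simp
      ring
    rw [key]
    positivity
  -- Step 3: integrate the bound
  have hint : Integrable
      (fun y : Fin d → ℝ => Real.exp (a / 2) * ∏ i, Real.exp (s * y i ^ 2 / 2))
      (Measure.pi fun _ : Fin d => gaussianReal 0 1) :=
    (integrable_pi_prod_gaussian d _ (integrable_exp_sq_gaussianReal hs1)).const_mul _
  have h3 : ∫ y : Fin d → ℝ, Real.exp (c * Real.sqrt (∑ i, y i ^ 2))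
        ∂(Measure.pi fun _ : Fin d => gaussianReal 0 1)
      ≤ Real.exp (a / 2) * Real.sqrt ((1 - s)⁻¹) ^ d := by
    calc ∫ y : Fin d → ℝ, Real.exp (c * Real.sqrt (∑ i, y i ^ 2))
          ∂(Measure.pi fun _ : Fin d => gaussianReal 0 1)
        ≤ ∫ y : Fin d → ℝ, Real.exp (a / 2) * ∏ i, Real.exp (s * y i ^ 2 / 2)
          ∂(Measure.pi fun _ : Fin d => gaussianReal 0 1) :=
          integral_mono_of_nonneg (Filter.Eventually.of_forall fun y => (Real.exp_pos _).le)
            hint (Filter.Eventually.of_forall h2)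
      _ = Real.exp (a / 2) * Real.sqrt ((1 - s)⁻¹) ^ d := by
          rw [integral_const_mul,
            integral_pi_prod_gaussian d (fun x => Real.exp (s * x ^ 2 / 2)),
            integral_exp_sq_gaussianReal hs1]
  -- Step 4: numeric bound
  have key1 : Real.sqrt ((1 - s)⁻¹) ≤ Real.exp (s / (1 - s) / 2) := by
    have hinv : (1 - s)⁻¹ ≤ Real.exp (s / (1 - s)) := by
      have h := Real.add_one_le_exp (s / (1 - s))
      have heq : s / (1 - s) + 1 = (1 - s)⁻¹ := by field_simp; ring
      linarith [heq ▸ h]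
    calc Real.sqrt ((1 - s)⁻¹) ≤ Real.sqrt (Real.exp (s / (1 - s))) := Real.sqrt_le_sqrt hinv
      _ = Real.exp (s / (1 - s) / 2) := (Real.exp_half _).symm
  have key2 : Real.sqrt ((1 - s)⁻¹) ^ d ≤ Real.exp ((d : ℝ) * (s / (1 - s) / 2)) := by
    rw [Real.exp_nat_mul]
    exact pow_le_pow_left₀ (Real.sqrt_nonneg _) key1 d
  have hval : (d : ℝ) * (s / (1 - s) / 2) = a / (2 * (1 - s)) := by
    rw [← hds]; field_simp
  have key3 : a / 2 + a / (2 * (1 - s)) ≤ 5 * a / 4 := by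
    have h4 : a / (2 * (1 - s)) ≤ 3 * a / 4 := by
      rw [div_le_div_iff₀ (by linarith) (by norm_num)]
      nlinarith
    linarith
  have hu : 5 * a / 4 < 1 := by linarith
  have hone : (0:ℝ) < 1 - 5 * a / 4 := by linarith
  have h4 : Real.exp (5 * a / 4) ≤ (1 - 5 * a / 4)⁻¹ := by
    have h5 : 1 - 5 * a / 4 ≤ Real.exp (-(5 * a / 4)) := by
      have := Real.add_one_le_exp (-(5 * a / 4)); linarith
    calc Real.exp (5 * a / 4) = (Real.exp (-(5 * a / 4)))⁻¹ := by rw [Real.exp_neg, inv_inv]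
      _ ≤ (1 - 5 * a / 4)⁻¹ := by
          apply inv_anti₀ hone h5
  have h6 : (1 - 5 * a / 4)⁻¹ ≤ 1 + 5 * a := by
    rw [inv_eq_one_div, div_le_iff₀ hone]
    nlinarith
  have final : Real.exp (a / 2) * Real.sqrt ((1 - s)⁻¹) ^ d ≤ 1 + 5 * a := by
    calc Real.exp (a / 2) * Real.sqrt ((1 - s)⁻¹) ^ d
        ≤ Real.exp (a / 2) * Real.exp ((d : ℝ) * (s / (1 - s) / 2)) :=
          mul_le_mul_of_nonneg_left key2 (Real.exp_pos _).le
      _ = Real.exp (a / 2 + a / (2 * (1 - s))) := by rw [← Real.exp_add, hval]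
      _ ≤ Real.exp (5 * a / 4) := Real.exp_le_exp.mpr key3
      _ ≤ (1 - 5 * a / 4)⁻¹ := h4
      _ ≤ 1 + 5 * a := h6
  calc ∫ x, Real.exp (c * ‖x‖) ∂ stdGaussian d
      ≤ Real.exp (a / 2) * Real.sqrt ((1 - s)⁻¹) ^ d := by rw [h1]; exact h3
    _ ≤ 1 + 5 * a := final
    _ = 1 + 5 * Real.sqrt d * c := by rw [ha]; ring
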